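/- Let p ≥ 0 be an integer, let n* > 0 with n* ≠ 1, and let κ* ≠ 0 be a complex number such that J_p(κ*) = 0, J_p(√n*·κ*) = 0, J_p'(κ*) ≠ 0 and J_p'(√n*·κ*) ≠ 0. Then κ* is a zero of order exactly 3 of the entire function κ ↦ F_p(κ, n*): F_p(κ*, n*) = 0, the first and second derivatives of κ ↦ F_p(κ, n*) vanish at κ*, and its third derivative at κ* equals 2·(n* − 1)·√n*·κ*·J_p'(κ*)·J_p'(√n*·κ*) ≠ 0. -/

import Mathlib

open Complex Real Filter Set

/-- Bessel function of the first kind of integer order `p`. -/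
noncomputable def besselJ (p : ℕ) (z : ℂ) : ℂ :=
  ∑' m : ℕ, ((-1 : ℂ) ^ m / ((Nat.factorial m : ℂ) * (Nat.factorial (m + p) : ℂ)))
    * (z / 2) ^ (2 * m + p)

/-- Derivative of the Bessel function. -/
noncomputable def besselJ' (p : ℕ) (z : ℂ) : ℂ := deriv (besselJ p) z

/-- The ITE determinant function `F_p(κ, n)`. -/
noncomputable def Fp (p : ℕ) (κ : ℂ) (n : ℝ) : ℂ :=
  κ * (besselJ' p κ * besselJ p ((Real.sqrt n : ℂ) * κ)
    - (Real.sqrt n : ℂ) * besselJ p κ * besselJ' p ((Real.sqrt n : ℂ) * κ))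

section BesselAux
open Complex Real Filter Set Finset

noncomputable def bterm (p j m : ℕ) (z : ℂ) : ℂ :=
  ((-1 : ℂ) ^ m / ((Nat.factorial m : ℂ) * (Nat.factorial (m + p) : ℂ)))
    * ((2 * m + p).descFactorial j : ℂ) / 2 ^ j * (z / 2) ^ (2 * m + p - j)

noncomputable def bfun (p j : ℕ) (z : ℂ) : ℂ := ∑' m, bterm p j m z

lemma bterm_hasDerivAt (p j m : ℕ) (z : ℂ) :
    HasDerivAt (bterm p j m) (bterm p (j + 1) m z) z := by
  set k := 2 * m + p with hk
  have hbase : HasDerivAt (fun w : ℂ => (w / 2) ^ (k - j))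
      ((k - j : ℕ) * (z / 2) ^ (k - j - 1) * (2⁻¹)) z := by
    simpa using ((hasDerivAt_id z).div_const 2).fun_pow (k - j)
  have h := hbase.const_mul
    (((-1 : ℂ) ^ m / ((Nat.factorial m : ℂ) * (Nat.factorial (m + p) : ℂ)))
      * ((k).descFactorial j : ℂ) / 2 ^ j)
  have heq : (((-1 : ℂ) ^ m / ((Nat.factorial m : ℂ) * (Nat.factorial (m + p) : ℂ)))
      * ((k).descFactorial j : ℂ) / 2 ^ j)
      * ((k - j : ℕ) * (z / 2) ^ (k - j - 1) * (2⁻¹)) = bterm p (j + 1) m z := by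
    rcases le_or_gt (j + 1) k with hle | hlt
    · have h1 : k.descFactorial (j + 1) = (k - j) * k.descFactorial j :=
        Nat.descFactorial_succ k j
      have h2 : k - j - 1 = k - (j + 1) := by omega
      rw [bterm, ← hk, h1, h2]
      push_cast
      ring
    · have h1 : k.descFactorial (j + 1) = 0 :=
        (Nat.descFactorial_eq_zero_iff_lt).mpr hlt
      have h2 : (k - j : ℕ) = 0 := by omega
      rw [bterm, ← hk, h1, h2]
      simp
  rw [heq] at h
  exact h.congr_deriv rfl |>.congr_of_eventuallyEq (by
    filter_upwards with w
    rw [bterm, ← hk])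

-- auxiliary: summability of (m+1)^j * y^m / m!
lemma aux_summable (j : ℕ) (y : ℝ) (hy : 0 ≤ y) :
    Summable (fun m : ℕ => ((m : ℝ) + 1) ^ j * y ^ m / m.factorial) := by
  have hgeo : Summable (fun m : ℕ => ((m : ℝ)) ^ j * (1 / 2 : ℝ) ^ m) :=
    summable_pow_mul_geometric_of_norm_lt_one j (by norm_num)
  have hgeo' : Summable (fun m : ℕ => ((m : ℝ) + 1) ^ j * (1 / 2 : ℝ) ^ m) := by
    have := (summable_nat_add_iff (f := fun m : ℕ => ((m : ℝ)) ^ j * (1 / 2 : ℝ) ^ m) 1).mpr hgeo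
    have h2 := this.mul_left (2 : ℝ)
    refine h2.congr fun m => ?_
    push_cast
    ring
  have hten : Tendsto (fun m : ℕ => ((m : ℝ) + 1) ^ j * (1 / 2 : ℝ) ^ m) atTop (nhds 0) :=
    hgeo'.tendsto_atTop_zero
  have hev : ∀ᶠ m : ℕ in atTop, ((m : ℝ) + 1) ^ j * (1 / 2 : ℝ) ^ m ≤ 1 :=
    hten.eventually (eventually_le_nhds one_pos)
  refine Summable.of_norm_bounded_eventually_nat
    (g := fun m => (2 * y) ^ m / m.factorial) (Real.summable_pow_div_factorial (2 * y)) ?_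
  filter_upwards [hev] with m hm
  have h1 : ((m : ℝ) + 1) ^ j ≤ 2 ^ m := by
    have h2 : (0 : ℝ) < (1 / 2 : ℝ) ^ m := by positivity
    rw [mul_comm] at hm
    calc ((m : ℝ) + 1) ^ j = ((1:ℝ)/2) ^ m * ((m : ℝ) + 1) ^ j * 2 ^ m := by
          field_simp
          rw [← mul_pow]; norm_num
      _ ≤ 1 * 2 ^ m := by
          apply mul_le_mul_of_nonneg_right hm (by positivity)
      _ = 2 ^ m := one_mul _
  have hnn : (0:ℝ) ≤ ((m : ℝ) + 1) ^ j * y ^ m / m.factorial := by positivity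
  rw [Real.norm_of_nonneg hnn]
  rw [mul_pow, div_le_div_iff_of_pos_right (by positivity)]
  exact mul_le_mul_of_nonneg_right h1 (by positivity)

noncomputable def ubnd (p j : ℕ) (R : ℝ) (m : ℕ) : ℝ :=
  ((2 * m + p).descFactorial j : ℝ) * (R / 2) ^ (2 * m + p - j) / m.factorial

lemma bterm_norm_le (p j m : ℕ) {R : ℝ} (hR : 2 ≤ R) {w : ℂ} (hw : ‖w‖ ≤ R) :
    ‖bterm p j m w‖ ≤ ubnd p j R m := by
  have hfac1 : (1 : ℝ) ≤ ((m + p).factorial : ℝ) := by exact_mod_cast Nat.one_le_iff_ne_zero.mpr (Nat.factorial_ne_zero _)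
  have hfac2 : (0 : ℝ) < (m.factorial : ℝ) := by exact_mod_cast m.factorial_pos
  have h2j : (1 : ℝ) ≤ (2 : ℝ) ^ j := one_le_pow₀ (by norm_num)
  have hnorm : ‖bterm p j m w‖ =
      ((2 * m + p).descFactorial j : ℝ) / ((m.factorial : ℝ) * ((m + p).factorial : ℝ) * 2 ^ j)
        * (‖w‖ / 2) ^ (2 * m + p - j) := by
    simp only [bterm, norm_mul, norm_div, norm_pow, norm_neg, norm_one, one_pow,
      Complex.norm_natCast]
    norm_num
    all_goals first | (left; ring) | (left; trivial) | ring
  rw [hnorm, ubnd]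
  have hle1 : ((2 * m + p).descFactorial j : ℝ) /
      ((m.factorial : ℝ) * ((m + p).factorial : ℝ) * 2 ^ j)
      ≤ ((2 * m + p).descFactorial j : ℝ) / (m.factorial : ℝ) := by
    apply div_le_div_of_nonneg_left (by positivity) hfac2
    calc (m.factorial : ℝ) = m.factorial * 1 * 1 := by ring
      _ ≤ (m.factorial : ℝ) * ((m + p).factorial : ℝ) * 2 ^ j := by
        apply mul_le_mul (by nlinarith) h2j (by norm_num) (by positivity)
  have hle2 : (‖w‖ / 2) ^ (2 * m + p - j) ≤ (R / 2) ^ (2 * m + p - j) := by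
    apply pow_le_pow_left₀ (by positivity) (by linarith)
  calc _ ≤ ((2 * m + p).descFactorial j : ℝ) / (m.factorial : ℝ) * (R / 2) ^ (2 * m + p - j) := by
        apply mul_le_mul hle1 hle2 (by positivity) (by positivity)
    _ = ubnd p j R m := by rw [ubnd]; ring



lemma ubnd_summable (p j : ℕ) {R : ℝ} (hR : 2 ≤ R) : Summable (ubnd p j R) := by
  have hR2 : (1 : ℝ) ≤ R / 2 := by linarith
  have key := (aux_summable j ((R / 2) ^ 2) (by positivity)).mul_left
    (((2 : ℝ) + p) ^ j * (R / 2) ^ p)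
  apply Summable.of_nonneg_of_le (fun m => by rw [ubnd]; positivity) _ key
  intro m
  rw [ubnd]
  have h1 : ((2 * m + p).descFactorial j : ℝ) ≤ (((2 : ℝ) + p) * ((m : ℝ) + 1)) ^ j := by
    calc ((2 * m + p).descFactorial j : ℝ) ≤ ((2 * m + p : ℕ) : ℝ) ^ j := by
          exact_mod_cast Nat.descFactorial_le_pow _ _
      _ ≤ (((2 : ℝ) + p) * ((m : ℝ) + 1)) ^ j := by
          apply pow_le_pow_left₀ (by positivity)
          push_cast; nlinarith [Nat.cast_nonneg (α := ℝ) m, Nat.cast_nonneg (α := ℝ) p]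
  have h2 : (R / 2) ^ (2 * m + p - j) ≤ (R / 2) ^ p * ((R / 2) ^ 2) ^ m := by
    calc (R / 2) ^ (2 * m + p - j) ≤ (R / 2) ^ (2 * m + p) :=
          pow_le_pow_right₀ hR2 (by omega)
      _ = (R / 2) ^ p * ((R / 2) ^ 2) ^ m := by rw [← pow_mul, ← pow_add]; ring_nf
  calc ((2 * m + p).descFactorial j : ℝ) * (R / 2) ^ (2 * m + p - j) / m.factorial
      ≤ ((((2 : ℝ) + p) * ((m : ℝ) + 1)) ^ j) * ((R / 2) ^ p * ((R / 2) ^ 2) ^ m) / m.factorial := by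
        apply div_le_div_of_nonneg_right _ (by exact_mod_cast m.factorial_pos.le)
        exact mul_le_mul h1 h2 (by positivity) (by positivity)
    _ = ((2 : ℝ) + p) ^ j * (R / 2) ^ p * (((m : ℝ) + 1) ^ j * ((R / 2) ^ 2) ^ m / m.factorial) := by
        rw [mul_pow]; ring

lemma bterm_summable (p j : ℕ) (z : ℂ) : Summable (fun m => bterm p j m z) := by
  have hR : 2 ≤ 2 + ‖z‖ := le_add_of_nonneg_right (norm_nonneg z)
  exact Summable.of_norm_bounded (ubnd_summable p j hR)
    (fun m => bterm_norm_le p j m hR (by linarith [norm_nonneg z]))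

lemma bfun_hasSum (p j : ℕ) (z : ℂ) : HasSum (fun m => bterm p j m z) (bfun p j z) :=
  (bterm_summable p j z).hasSum

lemma bfun_diff_deriv (p j : ℕ) (z : ℂ) :
    DifferentiableAt ℂ (bfun p j) z ∧ deriv (bfun p j) z = bfun p (j + 1) z := by
  set R := 2 + ‖z‖ with hRdef
  have hR : 2 ≤ R := le_add_of_nonneg_right (norm_nonneg z)
  have hz : z ∈ Metric.ball (0 : ℂ) R := by
    rw [Metric.mem_ball, dist_zero_right]
    have := norm_nonneg z; rw [hRdef]; linarith
  have hdiff : ∀ i, DifferentiableOn ℂ (bterm p j i) (Metric.ball (0 : ℂ) R) :=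
    fun i w _ => (bterm_hasDerivAt p j i w).differentiableAt.differentiableWithinAt
  have hbound : ∀ (i : ℕ) (w : ℂ), w ∈ Metric.ball (0 : ℂ) R → ‖bterm p j i w‖ ≤ ubnd p j R i := by
    intro i w hw
    rw [Metric.mem_ball, dist_zero_right] at hw
    exact bterm_norm_le p j i hR hw.le
  constructor
  · have hd := Complex.differentiableOn_tsum_of_summable_norm (ubnd_summable p j hR)
      hdiff Metric.isOpen_ball hbound
    exact hd.differentiableAt (Metric.isOpen_ball.mem_nhds hz)
  · have hs := Complex.hasSum_deriv_of_summable_norm (ubnd_summable p j hR)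
      hdiff Metric.isOpen_ball hbound hz
    have heq : ∀ i, deriv (bterm p j i) z = bterm p (j + 1) i z :=
      fun i => (bterm_hasDerivAt p j i z).deriv
    simp only [heq] at hs
    exact hs.tsum_eq.symm

lemma bfun_hasDerivAt (p j : ℕ) (z : ℂ) : HasDerivAt (bfun p j) (bfun p (j + 1) z) z := by
  have h := bfun_diff_deriv p j z
  rw [← h.2]
  exact h.1.hasDerivAt

noncomputable def gterm (p : ℕ) (z : ℂ) (m : ℕ) : ℂ :=
  ((-1 : ℂ) ^ m / ((Nat.factorial m : ℂ) * (Nat.factorial (m + p) : ℂ)))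
    * ((4 * m * (m + p) : ℕ) : ℂ) * (z / 2) ^ (2 * m + p)



lemma key1 (p : ℕ) (z : ℂ) (m : ℕ) :
    z ^ 2 * bterm p 2 m z + z * bterm p 1 m z - (p : ℂ) ^ 2 * bterm p 0 m z = gterm p z m := by
  rcases hk : 2 * m + p with _ | k
  · have hm : m = 0 := by omega
    have hp : p = 0 := by omega
    subst hm; subst hp
    simp [bterm, gterm]
  · rcases k with _ | k
    · have hm : m = 0 := by omega
      have hp : p = 1 := by omega
      subst hm; subst hp
      simp [bterm, gterm]
      ring
    · -- main case : 2*m+p = k+2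
      have hc : (k : ℂ) + 2 = 2 * m + p := by exact_mod_cast congrArg (Nat.cast (R := ℂ)) hk.symm
      have hco : ((4 * m * (m + p) : ℕ) : ℂ) = ((k : ℂ) + 2) ^ 2 - (p : ℂ) ^ 2 := by
        push_cast
        linear_combination (-(((k : ℂ) + 2) + (2 * m + p))) * hc
      simp only [bterm, gterm, hk, hco]
      have hd2 : (k + 2).descFactorial 2 = (k + 2) * (k + 1) := by
        simp [Nat.descFactorial_succ, Nat.descFactorial_one]; ring
      have hd1 : (k + 2).descFactorial 1 = k + 2 := Nat.descFactorial_one _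
      rw [hd2, hd1]
      simp only [Nat.add_sub_cancel, Nat.descFactorial_zero, show k + 2 - 1 = k + 1 from rfl,
        Nat.sub_zero, pow_zero, pow_one]
      push_cast
      rw [show k + 2 = k + 1 + 1 from rfl, pow_succ, pow_succ]
      ring

lemma key2 (p : ℕ) (z : ℂ) (m : ℕ) :
    gterm p z (m + 1) = -(z ^ 2) * bterm p 0 m z := by
  have hfs : (m + 1 + p).factorial = (m + p + 1) * (m + p).factorial := by
    rw [show m + 1 + p = (m + p) + 1 by ring, Nat.factorial_succ]
  have hfm : (m + 1).factorial = (m + 1) * m.factorial := Nat.factorial_succ m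
  have h1 : ((m.factorial : ℂ)) ≠ 0 := by exact_mod_cast m.factorial_ne_zero
  have h2 : (((m + p).factorial : ℂ)) ≠ 0 := by exact_mod_cast (m + p).factorial_ne_zero
  have h3 : ((m : ℂ) + 1) ≠ 0 := Nat.cast_add_one_ne_zero m
  have h4 : ((m : ℂ) + p + 1) ≠ 0 := by have := Nat.cast_add_one_ne_zero (R := ℂ) (m + p); push_cast at this ⊢; exact this
  simp only [gterm, bterm, hfs, hfm]
  rw [show 2 * (m + 1) + p = (2 * m + p) + 2 by ring, pow_add, pow_succ]
  simp only [Nat.descFactorial_zero, Nat.sub_zero]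
  push_cast
  field_simp
  ring

lemma bfun_ode (p : ℕ) (z : ℂ) :
    z ^ 2 * bfun p 2 z + z * bfun p 1 z + (z ^ 2 - (p : ℂ) ^ 2) * bfun p 0 z = 0 := by
  have h0 := bfun_hasSum p 0 z
  have h1 := bfun_hasSum p 1 z
  have h2 := bfun_hasSum p 2 z
  have hL : HasSum (fun m => z ^ 2 * bterm p 2 m z + z * bterm p 1 m z - (p : ℂ) ^ 2 * bterm p 0 m z)
      (z ^ 2 * bfun p 2 z + z * bfun p 1 z - (p : ℂ) ^ 2 * bfun p 0 z) :=
    ((h2.mul_left _).add (h1.mul_left _)).sub (h0.mul_left _)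
  rw [funext (key1 p z)] at hL
  have hshift : HasSum (fun m => gterm p z (m + 1)) (-(z ^ 2) * bfun p 0 z) := by
    have := h0.mul_left (-(z ^ 2))
    rwa [show (fun m => -(z^2) * bterm p 0 m z) = fun m => gterm p z (m + 1) from
      funext fun m => (key2 p z m).symm] at this
  have hg0 : gterm p z 0 = 0 := by simp [gterm]
  have hG := (hasSum_nat_add_iff (f := gterm p z) 1).mp hshift
  rw [Finset.range_one, Finset.sum_singleton, hg0, add_zero] at hG
  have := hL.unique hG
  linear_combination this

end BesselAux

section BesselAux2
open Complex Real Filter Set Finset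

lemma besselJ_eq_bfun (p : ℕ) : besselJ p = bfun p 0 := by
  funext z
  simp [besselJ, bfun, bterm]

lemma besselJ'_eq_bfun (p : ℕ) : besselJ' p = bfun p 1 := by
  funext z
  rw [besselJ', besselJ_eq_bfun, (bfun_hasDerivAt p 0 z).deriv]

-- differentiated ODE
lemma bfun_ode' (p : ℕ) (z : ℂ) :
    2 * z * bfun p 2 z + z ^ 2 * bfun p 3 z + bfun p 1 z + z * bfun p 2 z
      + (2 * z * bfun p 0 z + (z ^ 2 - (p : ℂ) ^ 2) * bfun p 1 z) = 0 := by
  have hder : HasDerivAt (fun w : ℂ => w ^ 2 * bfun p 2 w + w * bfun p 1 w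
      + (w ^ 2 - (p : ℂ) ^ 2) * bfun p 0 w)
      (2 * z * bfun p 2 z + z ^ 2 * bfun p 3 z + bfun p 1 z + z * bfun p 2 z
        + (2 * z * bfun p 0 z + (z ^ 2 - (p : ℂ) ^ 2) * bfun p 1 z)) z := by
    have h1 : HasDerivAt (fun w : ℂ => w ^ 2) (2 * z) z := by
      simpa using (hasDerivAt_pow 2 z)
    have h2 : HasDerivAt (fun w : ℂ => w ^ 2 - (p : ℂ) ^ 2) (2 * z) z := h1.sub_const _
    have hA := h1.mul (bfun_hasDerivAt p 2 z)
    have hB := (hasDerivAt_id z).mul (bfun_hasDerivAt p 1 z)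
    have hC := h2.mul (bfun_hasDerivAt p 0 z)
    have := (hA.add hB).add hC
    convert this using 1
    show _ = 2 * z * bfun p 2 z + z ^ 2 * bfun p (2 + 1) z
      + (1 * bfun p 1 z + z * bfun p (1 + 1) z)
      + (2 * z * bfun p 0 z + (z ^ 2 - (p : ℂ) ^ 2) * bfun p (0 + 1) z)
    norm_num
    ring
    all_goals rfl
  have hzero : (fun w : ℂ => w ^ 2 * bfun p 2 w + w * bfun p 1 w
      + (w ^ 2 - (p : ℂ) ^ 2) * bfun p 0 w) = fun _ => (0 : ℂ) :=
    funext fun w => bfun_ode p w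
  rw [hzero] at hder
  exact hder.unique (hasDerivAt_const z 0)

end BesselAux2

/-- `κ*` is a zero of order exactly 3 of `κ ↦ F_p(κ, n*)`. -/
theorem stmt_13 (p : ℕ) (nst : ℝ) (hnst : 0 < nst) (hnst1 : nst ≠ 1)
    (κs : ℂ) (hκs : κs ≠ 0)
    (hJ : besselJ p κs = 0) (hJn : besselJ p ((Real.sqrt nst : ℂ) * κs) = 0)
    (hJ' : besselJ' p κs ≠ 0) (hJn' : besselJ' p ((Real.sqrt nst : ℂ) * κs) ≠ 0) :
    Fp p κs nst = 0 ∧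
    iteratedDeriv 1 (fun κ : ℂ => Fp p κ nst) κs = 0 ∧
    iteratedDeriv 2 (fun κ : ℂ => Fp p κ nst) κs = 0 ∧
    iteratedDeriv 3 (fun κ : ℂ => Fp p κ nst) κs
      = 2 * ((nst : ℂ) - 1) * (Real.sqrt nst : ℂ) * κs
          * besselJ' p κs * besselJ' p ((Real.sqrt nst : ℂ) * κs) ∧
    2 * ((nst : ℂ) - 1) * (Real.sqrt nst : ℂ) * κs
          * besselJ' p κs * besselJ' p ((Real.sqrt nst : ℂ) * κs) ≠ 0 := by
  set s : ℂ := (Real.sqrt nst : ℂ) with hs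
  have hs0 : s ≠ 0 := by
    rw [hs]
    exact Complex.ofReal_ne_zero.mpr (Real.sqrt_ne_zero'.mpr hnst)
  have hs2 : s ^ 2 = (nst : ℂ) := by
    rw [hs, ← Complex.ofReal_pow, Real.sq_sqrt hnst.le]
  -- translate hypotheses
  rw [besselJ_eq_bfun] at hJ hJn
  rw [besselJ'_eq_bfun] at hJ' hJn'
  have hsk : s * κs ≠ 0 := mul_ne_zero hs0 hκs
  -- second derivatives at the zeros
  have e2 : κs * bfun p 2 κs = - bfun p 1 κs := by
    have h := bfun_ode p κs
    rw [hJ] at h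
    apply mul_left_cancel₀ hκs
    linear_combination h
  have e2n : (s * κs) * bfun p 2 (s * κs) = - bfun p 1 (s * κs) := by
    have h := bfun_ode p (s * κs)
    rw [hJn] at h
    apply mul_left_cancel₀ hsk
    linear_combination h
  -- third derivatives at the zeros
  have e3 : κs ^ 2 * bfun p 3 κs = ((p : ℂ) ^ 2 + 2 - κs ^ 2) * bfun p 1 κs := by
    have h := bfun_ode' p κs
    rw [hJ] at h
    linear_combination h - 3 * e2
  have e3n : (s * κs) ^ 2 * bfun p 3 (s * κs)
      = ((p : ℂ) ^ 2 + 2 - (s * κs) ^ 2) * bfun p 1 (s * κs) := by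
    have h := bfun_ode' p (s * κs)
    rw [hJn] at h
    linear_combination h - 3 * e2n
  -- chain rule helper
  have hcomp : ∀ (j : ℕ) (z : ℂ),
      HasDerivAt (fun κ : ℂ => bfun p j (s * κ)) (s * bfun p (j + 1) (s * z)) z := by
    intro j z
    have h1 : HasDerivAt (fun κ : ℂ => s * κ) s z := by
      simpa using (hasDerivAt_id z).const_mul s
    have h2 := (bfun_hasDerivAt p j (s * z)).comp z h1
    rw [mul_comm]
    exact h2
  -- the W functions
  set W0 : ℂ → ℂ := fun κ => bfun p 1 κ * bfun p 0 (s * κ) - s * bfun p 0 κ * bfun p 1 (s * κ)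
    with hW0
  set W1 : ℂ → ℂ := fun κ => bfun p 2 κ * bfun p 0 (s * κ) - s * s * bfun p 0 κ * bfun p 2 (s * κ)
    with hW1
  set W2 : ℂ → ℂ := fun κ => bfun p 3 κ * bfun p 0 (s * κ) + s * bfun p 2 κ * bfun p 1 (s * κ)
      - s * s * bfun p 1 κ * bfun p 2 (s * κ) - s * s * s * bfun p 0 κ * bfun p 3 (s * κ)
    with hW2
  set W3 : ℂ → ℂ := fun κ => bfun p 4 κ * bfun p 0 (s * κ) + 2 * s * bfun p 3 κ * bfun p 1 (s * κ)
      - 2 * s ^ 3 * bfun p 1 κ * bfun p 3 (s * κ) - s ^ 4 * bfun p 0 κ * bfun p 4 (s * κ)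
    with hW3
  have hW0d : ∀ κ : ℂ, HasDerivAt W0 (W1 κ) κ := by
    intro κ
    have h := ((bfun_hasDerivAt p 1 κ).mul (hcomp 0 κ)).sub
      (((bfun_hasDerivAt p 0 κ).const_mul s).mul (hcomp 1 κ))
    convert h using 1
    show W1 κ = bfun p (1+1) κ * bfun p 0 (s * κ) + bfun p 1 κ * (s * bfun p (0+1) (s * κ))
      - (s * bfun p (0+1) κ * bfun p 1 (s * κ) + s * bfun p 0 κ * (s * bfun p (1+1) (s * κ)))
    rw [hW1]
    norm_num
    ring
    all_goals rfl
  have hW1d : ∀ κ : ℂ, HasDerivAt W1 (W2 κ) κ := by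
    intro κ
    have h := ((bfun_hasDerivAt p 2 κ).mul (hcomp 0 κ)).sub
      ((((bfun_hasDerivAt p 0 κ).const_mul (s * s))).mul (hcomp 2 κ))
    convert h using 1
    show W2 κ = bfun p (2+1) κ * bfun p 0 (s * κ) + bfun p 2 κ * (s * bfun p (0+1) (s * κ))
      - (s * s * bfun p (0+1) κ * bfun p 2 (s * κ)
        + s * s * bfun p 0 κ * (s * bfun p (2+1) (s * κ)))
    rw [hW2]
    norm_num
    ring
    all_goals rfl
  have hW2d : ∀ κ : ℂ, HasDerivAt W2 (W3 κ) κ := by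
    intro κ
    have h := ((((bfun_hasDerivAt p 3 κ).mul (hcomp 0 κ)).add
        (((bfun_hasDerivAt p 2 κ).const_mul s).mul (hcomp 1 κ))).sub
      (((bfun_hasDerivAt p 1 κ).const_mul (s * s)).mul (hcomp 2 κ))).sub
      (((bfun_hasDerivAt p 0 κ).const_mul (s * s * s)).mul (hcomp 3 κ))
    convert h using 1
    show W3 κ = bfun p (3+1) κ * bfun p 0 (s * κ) + bfun p 3 κ * (s * bfun p (0+1) (s * κ))
        + (s * bfun p (2+1) κ * bfun p 1 (s * κ) + s * bfun p 2 κ * (s * bfun p (1+1) (s * κ)))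
      - (s * s * bfun p (1+1) κ * bfun p 2 (s * κ)
          + s * s * bfun p 1 κ * (s * bfun p (2+1) (s * κ)))
      - (s * s * s * bfun p (0+1) κ * bfun p 3 (s * κ)
          + s * s * s * bfun p 0 κ * (s * bfun p (3+1) (s * κ)))
    rw [hW3]
    norm_num
    ring
    all_goals rfl
  -- the function Fp as κ * W0 κ
  have hFp : (fun κ : ℂ => Fp p κ nst) = fun κ => κ * W0 κ := by
    funext κ
    rw [Fp, besselJ_eq_bfun, besselJ'_eq_bfun, hW0, ← hs]
  -- first derivative (function level)
  have hd1fun : deriv (fun κ : ℂ => Fp p κ nst) = fun κ => W0 κ + κ * W1 κ := by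
    funext κ
    rw [hFp]
    have h : HasDerivAt (fun κ : ℂ => κ * W0 κ) (1 * W0 κ + κ * W1 κ) κ :=
      (hasDerivAt_id κ).mul (hW0d κ)
    rw [h.deriv]
    ring
  -- second derivative (function level)
  have hd2fun : deriv (deriv (fun κ : ℂ => Fp p κ nst)) = fun κ => 2 * W1 κ + κ * W2 κ := by
    funext κ
    rw [hd1fun]
    have h : HasDerivAt (fun κ : ℂ => W0 κ + κ * W1 κ) (W1 κ + (1 * W1 κ + κ * W2 κ)) κ :=
      (hW0d κ).add ((hasDerivAt_id κ).mul (hW1d κ))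
    rw [h.deriv]
    ring
  -- values at κs
  have vW0 : W0 κs = 0 := by rw [hW0]; simp only [hJ, hJn]; ring
  have vW1 : W1 κs = 0 := by rw [hW1]; simp only [hJ, hJn]; ring
  have vW2 : W2 κs = 0 := by
    apply mul_left_cancel₀ (mul_ne_zero hκs hsk)
    rw [hW2, mul_zero]
    simp only [hJ, hJn]
    linear_combination (s ^ 2 * κs * bfun p 1 (s * κs)) * e2
      - (s ^ 2 * κs * bfun p 1 κs) * e2n
  have vW3 : W3 κs = 2 * (s ^ 2 - 1) * s * bfun p 1 κs * bfun p 1 (s * κs) := by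
    apply mul_left_cancel₀ (mul_ne_zero (pow_ne_zero 2 hs0) (pow_ne_zero 4 hκs))
    rw [hW3]
    simp only [hJ, hJn]
    linear_combination (2 * s ^ 3 * κs ^ 2 * bfun p 1 (s * κs)) * e3
      - (2 * s ^ 3 * κs ^ 2 * bfun p 1 κs) * e3n
  refine ⟨?_, ?_, ?_, ?_, ?_⟩
  · rw [show Fp p κs nst = κs * W0 κs from congrFun hFp κs, vW0, mul_zero]
  · rw [iteratedDeriv_one, hd1fun]
    show W0 κs + κs * W1 κs = 0
    rw [vW0, vW1]
    ring
  · rw [show (2 : ℕ) = 1 + 1 from rfl, iteratedDeriv_succ, iteratedDeriv_one, hd2fun]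
    show 2 * W1 κs + κs * W2 κs = 0
    rw [vW1, vW2]
    ring
  · rw [show (3 : ℕ) = 1 + 1 + 1 from rfl, iteratedDeriv_succ, iteratedDeriv_succ,
      iteratedDeriv_one, hd2fun]
    have h : HasDerivAt (fun κ : ℂ => 2 * W1 κ + κ * W2 κ)
        (2 * W2 κs + (1 * W2 κs + κs * W3 κs)) κs :=
      ((hW1d κs).const_mul 2).add ((hasDerivAt_id κs).mul (hW2d κs))
    rw [h.deriv, vW2, vW3, besselJ'_eq_bfun, ← hs2]
    ring
  · rw [besselJ'_eq_bfun]
    apply mul_ne_zero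
    apply mul_ne_zero
    apply mul_ne_zero
    apply mul_ne_zero
    · exact mul_ne_zero two_ne_zero (sub_ne_zero.mpr (by exact_mod_cast hnst1))
    · exact hs0
    · exact hκs
    · exact hJ'
    · exact hJn'
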